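/- Let E be a real inner product space and f : E → ℝ a differentiable function that is l-smooth and μ-strongly convex with 0 < μ ≤ l, and let θ* be a global minimizer of f. Let {θ_k}_{k=0}^{M} be the gradient descent sequence θ_{k+1} = θ_k − (1/l)·∇f(θ_k) started from any θ_0 ∈ E. Then f(θ_M) − f(θ*) ≤ (1 − μ/l)^M · (f(θ_0) − f(θ*)). -/

import Mathlib

/-- Linear convergence of function values for gradient descent with step size `1/l` on a
differentiable, `l`-smooth and `μ`-strongly convex function with global minimizer `θ*`:
`f(θ_M) − f(θ*) ≤ (1 − μ/l)^M · (f(θ_0) − f(θ*))`. -/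
theorem stmt_8 {E : Type*} [NormedAddCommGroup E] [InnerProductSpace ℝ E]
    (f : E → ℝ) (f' : E → E)
    (hf : ∀ x, HasFDerivAt f (InnerProductSpace.toDualMap ℝ E (f' x)) x)
    (l μ : ℝ) (hμ : 0 < μ) (hμl : μ ≤ l)
    (hsmooth : ∀ x y : E,
      f y ≤ f x + (inner ℝ (f' x) (y - x) : ℝ) + (l / 2) * ‖y - x‖ ^ 2)
    (hstrong : ∀ x y : E,
      f y ≥ f x + (inner ℝ (f' x) (y - x) : ℝ) + (μ / 2) * ‖y - x‖ ^ 2)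
    (θstar : E) (hmin : ∀ x, f θstar ≤ f x)
    (θ : ℕ → E) (hθ : ∀ k, θ (k + 1) = θ k - (1 / l) • f' (θ k))
    (M : ℕ) :
    f (θ M) - f θstar ≤ (1 - μ / l) ^ M * (f (θ 0) - f θstar) := by
  have hl : 0 < l := hμ.trans_le hμl
  have key : ∀ k, f (θ (k+1)) - f θstar ≤ (1 - μ/l) * (f (θ k) - f θstar) := by
    intro k
    set x := θ k with hx
    set g := f' x with hg
    -- descent step
    have h1 : f (θ (k+1)) ≤ f x - ‖g‖^2 / (2*l) := by
      have hs := hsmooth x (θ (k+1))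
      rw [hθ k, ← hx, ← hg] at hs
      have hd : x - (1/l) • g - x = -((1/l) • g) := by abel
      rw [hd] at hs
      rw [inner_neg_right, real_inner_smul_right, real_inner_self_eq_norm_sq,
        norm_neg, norm_smul] at hs
      have hnl : ‖(1/l : ℝ)‖ = 1/l := by
        rw [Real.norm_eq_abs, abs_of_pos (by positivity)]
      rw [hnl] at hs
      have e1 : l/2 * (1/l*‖g‖)^2 = ‖g‖^2/(2*l) := by
        field_simp
      have e3 : 1/l*‖g‖^2 = 2*(‖g‖^2/(2*l)) := by field_simp
      rw [e1] at hs
      rw [hθ k, ← hx, ← hg]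
      linarith [hs]
    -- PL inequality
    have h2 : 2*μ*(f x - f θstar) ≤ ‖g‖^2 := by
      have hs := hstrong x θstar
      rw [← hg] at hs
      have h0 : 0 ≤ (μ/2) * ‖(θstar - x) + (1/μ) • g‖^2 := by positivity
      rw [norm_add_sq_real, real_inner_smul_right, norm_smul] at h0
      have hnμ : ‖(1/μ : ℝ)‖ = 1/μ := by
        rw [Real.norm_eq_abs, abs_of_pos (by positivity)]
      rw [hnμ] at h0
      have hcomm : (inner ℝ (θstar - x) g : ℝ) = inner ℝ g (θstar - x) := real_inner_comm _ _
      rw [hcomm] at h0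
      have e4 : μ/2 * (‖θstar - x‖^2 + 2*(1/μ * inner ℝ g (θstar - x)) + (1/μ*‖g‖)^2)
          = μ/2*‖θstar - x‖^2 + (inner ℝ g (θstar - x) : ℝ) + ‖g‖^2/(2*μ) := by
        field_simp
      rw [e4] at h0
      have hle : f x - f θstar ≤ ‖g‖^2/(2*μ) := by linarith [hs, h0]
      have e5 : 2*μ*(‖g‖^2/(2*μ)) = ‖g‖^2 := by field_simp
      have h6 : 2*μ*(f x - f θstar) ≤ 2*μ*(‖g‖^2/(2*μ)) :=
        mul_le_mul_of_nonneg_left hle (by positivity)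
      linarith [h6, e5.ge]
    have hfx : 0 ≤ f x - f θstar := sub_nonneg.mpr (hmin x)
    have hlne : l ≠ 0 := ne_of_gt hl
    have hgl : (μ/l) * (f x - f θstar) ≤ ‖g‖^2 / (2*l) := by
      rw [div_mul_eq_mul_div, div_le_div_iff₀ hl (by positivity : (0:ℝ) < 2*l)]
      nlinarith [h2, hl.le]
    have hring : (1 - μ/l) * (f x - f θstar)
        = (f x - f θstar) - (μ/l) * (f x - f θstar) := by ring
    linarith [h1, hgl]
  induction M with
  | zero => simp
  | succ n ih =>
    have hk := key n
    have h1 : 0 ≤ 1 - μ/l := by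
      rw [sub_nonneg]
      exact div_le_one_of_le₀ hμl hl.le
    calc f (θ (n+1)) - f θstar ≤ (1 - μ/l) * (f (θ n) - f θstar) := hk
      _ ≤ (1 - μ/l) * ((1 - μ/l)^n * (f (θ 0) - f θstar)) := by
          exact mul_le_mul_of_nonneg_left ih h1
      _ = (1 - μ/l)^(n+1) * (f (θ 0) - f θstar) := by ring
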